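/- The system of equations a₀ + ((d₂+8)/(d₂+16))p = 1, a₀ = -(d₂(d₂+2)/(16d₁))a₁ + (d₂(d₂+2) - 2d₁(d₂+8))/(16 a₁ d₁) + (d₂+16)/8, 6a₀ - (d₂+2)a₁ + d₂ - 4 = 0 with (d₁, d₂) = (21, 28) has exactly two real solutions with a₁ ≠ 0: (a₀, a₁, p) = (1, 1, 0) and (a₀, a₁, p) = (-8/3, 4/15, 121/27). -/

import Mathlib

/-- The m-quasi-Einstein system for F₄ with (d₁, d₂) = (21, 28) has exactly the two
solutions (a₀, a₁, p) = (1, 1, 0) and (a₀, a₁, p) = (-8 / 3, 4 / 15, 121 / 27) with a₁ ≠ 0. -/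
theorem stmt18 (a₀ a₁ p : ℝ) (ha₁ : a₁ ≠ 0) :
    (a₀ + (((28 : ℝ) + 8) / (28 + 16)) * p = 1 ∧
      a₀ = -(((28 : ℝ) * (28 + 2)) / (16 * 21)) * a₁
            + ((28 : ℝ) * (28 + 2) - 2 * 21 * (28 + 8)) / (16 * a₁ * 21)
            + ((28 : ℝ) + 16) / 8 ∧
      6 * a₀ - ((28 : ℝ) + 2) * a₁ + 28 - 4 = 0) ↔
      ((a₀, a₁, p) = (1, 1, 0) ∨ (a₀, a₁, p) = (-8 / 3, 4 / 15, 121 / 27)) := by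
  constructor
  · rintro ⟨e1, e2, e3⟩
    have ha : a₀ = 5 * a₁ - 4 := by linarith
    have hq : (a₁ - 1) * (15 * a₁ - 4) = 0 := by
      rw [ha] at e2
      field_simp at e2
      linear_combination (1 / 1344 : ℝ) * e2
    rcases mul_eq_zero.1 hq with h | h
    · left
      have h1 : a₁ = 1 := by linarith
      have h0 : a₀ = 1 := by rw [ha, h1]; ring
      have hp : p = 0 := by rw [h0] at e1; linarith
      simp [h0, h1, hp]
    · right
      have h1 : a₁ = 4 / 15 := by linarith
      have h0 : a₀ = -8 / 3 := by rw [ha, h1]; ring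
      have hp : p = 121 / 27 := by rw [h0] at e1; linarith
      simp [h0, h1, hp]
  · rintro (h | h) <;> simp only [Prod.mk.injEq] at h <;>
      obtain ⟨h0, h1, hp⟩ := h <;> subst h0 h1 hp <;> norm_num
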